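/- arXiv:2510.17340 — 3 statements merged into one kernel-verified Lean document; each statement's English description precedes it below -/
import Mathlib

section
/- Let K and H be closed subgroups of a compact Lie group G. If there exist g, g' ∈ G such that gKg⁻¹ ⊆ H and g'H(g')⁻¹ ⊆ K, then gKg⁻¹ = H and g'H(g')⁻¹ = K. -/
open Filter

/-- In a compact topological group, a closed subgroup that contains one of its
conjugates is equal to that conjugate. -/
theorem conj_map_eq_of_le {G : Type*} [Group G] [TopologicalSpace G]
    [IsTopologicalGroup G] [CompactSpace G]
    (K : Subgroup G) (hK : IsClosed (K : Set G)) (a : G)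
    (h : Subgroup.map (MulAut.conj a).toMonoidHom K ≤ K) :
    Subgroup.map (MulAut.conj a).toMonoidHom K = K := by
  refine le_antisymm h fun k hk => ?_
  have hstep : ∀ x ∈ K, a * x * a⁻¹ ∈ K := fun x hx => h ⟨x, hx, rfl⟩
  have hn : ∀ n : ℕ, a ^ n * k * (a ^ n)⁻¹ ∈ K := by
    intro n
    induction n with
    | zero => simpa using hk
    | succ n ih =>
        have h2 := hstep _ ih
        have heq : a * (a ^ n * k * (a ^ n)⁻¹) * a⁻¹
            = a ^ (n + 1) * k * (a ^ (n + 1))⁻¹ := by group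
        rwa [heq] at h2
  -- `a⁻¹` is a cluster point of the sequence `a ^ n`
  have hc : MapClusterPt a⁻¹ atTop (a ^ · : ℕ → G) :=
    mapClusterPt_inv_atTop_pow.2 (mapClusterPt_self_atTop_pow a)
  have hcont : ContinuousAt (fun x : G => x * k * x⁻¹) a⁻¹ := by fun_prop
  have hc2 : MapClusterPt (a⁻¹ * k * a⁻¹⁻¹) atTop
      ((fun x : G => x * k * x⁻¹) ∘ (a ^ · : ℕ → G)) :=
    hc.continuousAt_comp hcont
  have hmem : a⁻¹ * k * a⁻¹⁻¹ ∈ K := by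
    have hclos : a⁻¹ * k * a⁻¹⁻¹ ∈ closure (K : Set G) := by
      refine mem_closure_iff_clusterPt.2 (hc2.clusterPt.mono ?_)
      refine le_principal_iff.2 (mem_map.2 ?_)
      filter_upwards [] with n
      exact hn n
    rwa [hK.closure_eq] at hclos
  refine ⟨a⁻¹ * k * a⁻¹⁻¹, hmem, ?_⟩
  show a * (a⁻¹ * k * a⁻¹⁻¹) * a⁻¹ = k
  group

/-- Closed subgroups of a compact Lie group that are mutually conjugate-included
are in fact conjugate. -/
theorem conj_subset_antisymm_of_compact_lieGroup
    {E : Type*} [NormedAddCommGroup E] [NormedSpace ℝ E] [FiniteDimensional ℝ E]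
    {M : Type*} [TopologicalSpace M] {I : ModelWithCorners ℝ E M}
    {G : Type*} [TopologicalSpace G] [ChartedSpace M G] [Group G] [LieGroup I (⊤ : ℕ∞) G]
    [CompactSpace G]
    (K H : Subgroup G) (hK : IsClosed (K : Set G)) (hH : IsClosed (H : Set G))
    (g g' : G)
    (h1 : Subgroup.map (MulAut.conj g).toMonoidHom K ≤ H)
    (h2 : Subgroup.map (MulAut.conj g').toMonoidHom H ≤ K) :
    Subgroup.map (MulAut.conj g).toMonoidHom K = H ∧
    Subgroup.map (MulAut.conj g').toMonoidHom H = K := by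
  have : IsTopologicalGroup G := topologicalGroup_of_lieGroup I (⊤ : ℕ∞)
  have key : Subgroup.map (MulAut.conj (g' * g)).toMonoidHom K = K := by
    refine conj_map_eq_of_le K hK (g' * g) ?_
    intro x hx
    obtain ⟨y, hy, rfl⟩ := hx
    have : (MulAut.conj g).toMonoidHom y ∈ H := h1 ⟨y, hy, rfl⟩
    have h3 : (MulAut.conj g').toMonoidHom ((MulAut.conj g).toMonoidHom y) ∈ K :=
      h2 ⟨_, this, rfl⟩
    convert h3 using 1
    simp [MulAut.conj_apply, mul_assoc]
  have hKH : Subgroup.map (MulAut.conj g).toMonoidHom K = H := by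
    refine le_antisymm h1 ?_
    intro x hx
    have h4 : (MulAut.conj g').toMonoidHom x ∈ K := h2 ⟨x, hx, rfl⟩
    rw [← key] at h4
    obtain ⟨y, hy, hyx⟩ := h4
    refine ⟨y, hy, ?_⟩
    have : (MulAut.conj (g' * g)) y = (MulAut.conj g') x := hyx
    simpa [MulAut.conj_apply, mul_assoc] using
      congrArg (fun z => g'⁻¹ * z * g') this
  refine ⟨hKH, ?_⟩
  have hcomp : (MulAut.conj g').toMonoidHom.comp (MulAut.conj g).toMonoidHom
      = (MulAut.conj (g' * g)).toMonoidHom := by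
    ext x; simp [MulAut.conj_apply, mul_assoc]
  rw [← hKH, Subgroup.map_map, hcomp, key]
end

section
/- Let G be a compact Lie group, and let CSC(G) be the set of closed subgroups of G modulo conjugation. The relation [A] ≤ [B] defined by 'there exists g ∈ G with gAg⁻¹ ⊆ B' is a partial order on CSC(G); in particular it is antisymmetric. -/
open scoped Topology
open Filter

/-- The type of closed subgroups of a topological group. -/
def ClosedSub (G : Type*) [Group G] [TopologicalSpace G] : Type _ :=
  {K : Subgroup G // IsClosed (K : Set G)}

/-- Conjugacy relation on closed subgroups. -/
def conjRel {G : Type*} [Group G] [TopologicalSpace G] (A B : ClosedSub G) : Prop :=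
  ∃ g : G, Subgroup.map (MulAut.conj g).toMonoidHom A.1 = B.1

/-- The set of closed subgroups of `G` modulo conjugation. -/
def CSC (G : Type*) [Group G] [TopologicalSpace G] : Type _ :=
  Quot (conjRel (G := G))

/-- The relation `[A] ≤ [B]` iff some conjugate of a representative of `[A]` is
contained in a representative of `[B]`. -/
def CSCle {G : Type*} [Group G] [TopologicalSpace G] (x y : CSC G) : Prop :=
  ∃ A B : ClosedSub G, Quot.mk _ A = x ∧ Quot.mk _ B = y ∧
    ∃ g : G, Subgroup.map (MulAut.conj g).toMonoidHom A.1 ≤ B.1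


section Aux

variable {G : Type*} [Group G] [TopologicalSpace G]

private lemma conjMap_mul (a b : G) (K : Subgroup G) :
    Subgroup.map (MulAut.conj (a * b)).toMonoidHom K
      = Subgroup.map (MulAut.conj a).toMonoidHom
          (Subgroup.map (MulAut.conj b).toMonoidHom K) := by
  rw [Subgroup.map_map]
  congr 1
  ext x
  simp [mul_assoc]

private lemma conjMap_one (K : Subgroup G) :
    Subgroup.map (MulAut.conj (1 : G)).toMonoidHom K = K := by
  ext x
  simp

private lemma conjMap_cancel (a : G) (K : Subgroup G) :
    Subgroup.map (MulAut.conj a⁻¹).toMonoidHom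
      (Subgroup.map (MulAut.conj a).toMonoidHom K) = K := by
  rw [← conjMap_mul, inv_mul_cancel, conjMap_one]

private lemma conjMap_le_iff (a : G) {K L : Subgroup G} :
    Subgroup.map (MulAut.conj a).toMonoidHom K ≤ Subgroup.map (MulAut.conj a).toMonoidHom L
      ↔ K ≤ L := by
  constructor
  · intro h
    have := Subgroup.map_mono (f := (MulAut.conj a⁻¹).toMonoidHom) h
    rwa [conjMap_cancel, conjMap_cancel] at this
  · exact fun h => Subgroup.map_mono h

private lemma conjRel_equiv : Equivalence (conjRel (G := G)) := by
  constructor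
  · intro A
    exact ⟨1, conjMap_one _⟩
  · rintro A B ⟨g, hg⟩
    exact ⟨g⁻¹, by rw [← hg, ← conjMap_mul, inv_mul_cancel, conjMap_one]⟩
  · rintro A B C ⟨g, hg⟩ ⟨h, hh⟩
    exact ⟨h * g, by rw [conjMap_mul, hg, hh]⟩

private lemma quot_eq_conjRel {A B : ClosedSub G}
    (h : Quot.mk (conjRel (G := G)) A = Quot.mk (conjRel (G := G)) B) :
    conjRel A B :=
  (conjRel_equiv.eqvGen_iff).mp (Quot.eqvGen_exact h)

/-- In a compact Hausdorff group, `1` lies in the closure of the positive powers of `g`. -/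
private lemma one_mem_closure_powers [IsTopologicalGroup G] [CompactSpace G] [T2Space G] (g : G) :
    (1 : G) ∈ closure ((Subsemigroup.closure {g} : Subsemigroup G) : Set G) := by
  set S := (Subsemigroup.closure ({g} : Set G)).topologicalClosure with hS
  haveI : Nonempty S :=
    ⟨⟨g, subset_closure (Subsemigroup.subset_closure rfl)⟩⟩
  haveI : CompactSpace S :=
    isCompact_iff_compactSpace.mp
      ((Subsemigroup.isClosed_topologicalClosure _).isCompact)
  obtain ⟨m, hm⟩ := exists_idempotent_of_compact_t2_of_continuous_mul_left (M := S)
    (fun r => Continuous.subtype_mk (continuous_subtype_val.mul continuous_const) _)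
  have hmm : (m : G) * m = m := congrArg Subtype.val hm
  have hm1 : (m : G) = 1 := mul_eq_right.mp hmm
  have := m.2
  rw [hm1] at this
  exact this

/-- The key rigidity lemma: in a compact Hausdorff group, if a conjugate of a closed
subgroup is contained in it, then it is equal to it. -/
private lemma conj_le_self_eq [IsTopologicalGroup G] [CompactSpace G] [T2Space G]
    {K : Subgroup G} (hK : IsClosed (K : Set G)) (g : G)
    (h : Subgroup.map (MulAut.conj g).toMonoidHom K ≤ K) :
    Subgroup.map (MulAut.conj g).toMonoidHom K = K := by
  have hconj : ∀ x ∈ K, g * x * g⁻¹ ∈ K := by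
    intro x hx
    exact h ⟨x, hx, by simp⟩
  have main : ∀ x ∈ closure ((Subsemigroup.closure ({g} : Set G) : Subsemigroup G) : Set G),
      ∀ k ∈ K, g⁻¹ * (x * k * x⁻¹) * g ∈ K := by
    have hcl : ∀ x ∈ (Subsemigroup.closure ({g} : Set G) : Subsemigroup G),
        ∀ k ∈ K, g⁻¹ * (x * k * x⁻¹) * g ∈ K := by
      intro x hx
      induction hx using Subsemigroup.closure_induction with
      | mem x hx =>
        intro k hk
        have hxg : x = g := hx
        rw [hxg]
        have hkey : g⁻¹ * (g * k * g⁻¹) * g = k := by group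
        rw [hkey]; exact hk
      | mul x y hx hy ihx ihy =>
        intro k hk
        have hy' : y * k * y⁻¹ ∈ K := by
          have h1 := ihy k hk
          have h2 := hconj _ h1
          have : g * (g⁻¹ * (y * k * y⁻¹) * g) * g⁻¹ = y * k * y⁻¹ := by group
          rwa [this] at h2
        have := ihx _ hy'
        have heq : g⁻¹ * (x * (y * k * y⁻¹) * x⁻¹) * g
            = g⁻¹ * (x * y * k * (x * y)⁻¹) * g := by group
        rwa [heq] at this
    intro x hx k hk
    have hCset : IsClosed {y : G | g⁻¹ * (y * k * y⁻¹) * g ∈ (K : Set G)} := by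
      have hc : Continuous fun y : G => g⁻¹ * (y * k * y⁻¹) * g := by continuity
      exact hK.preimage hc
    exact closure_minimal (fun y hy => hcl y hy k hk) hCset hx
  refine le_antisymm h ?_
  intro k hk
  have h1 := main 1 (one_mem_closure_powers g) k hk
  refine ⟨g⁻¹ * k * g, by simpa using h1, ?_⟩
  simp only [MulEquiv.coe_toMonoidHom, MulAut.conj_apply]
  group

end Aux

/-- A (possibly non-Hausdorff a priori) topological group charted on a model with corners
is Hausdorff. -/
private lemma t2Space_of_charted
    {E : Type*} [NormedAddCommGroup E] [NormedSpace ℝ E]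
    {M : Type*} [TopologicalSpace M] (I : ModelWithCorners ℝ E M)
    {G : Type*} [TopologicalSpace G] [ChartedSpace M G] [Group G]
    [IsTopologicalGroup G] : T2Space G := by
  haveI : T2Space M := I.isClosedEmbedding.toIsEmbedding.t2Space
  rw [IsTopologicalGroup.t2Space_iff_one_closed]
  rw [← closure_subset_iff_isClosed]
  intro x hx
  have hspec : (1 : G) ⤳ x := specializes_iff_mem_closure.mpr hx
  have hins : Inseparable x 1 := (hspec.symm).antisymm hspec
  set c := chartAt M (1 : G) with hc
  have h1s : (1 : G) ∈ c.source := mem_chart_source M 1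
  have hxs : x ∈ c.source := by
    have : c.source ∈ 𝓝 x := by
      rw [hins]
      exact c.open_source.mem_nhds h1s
    exact mem_of_mem_nhds this
  have hmap : Inseparable (c x) (c 1) := by
    show 𝓝 (c x) = 𝓝 (c 1)
    rw [← c.map_nhds_eq hxs, ← c.map_nhds_eq h1s, hins]
  have : c x = c 1 := hmap.eq
  exact c.injOn hxs h1s this

/-- For a compact Lie group `G`, the relation `≤` is a partial order on `CSC G`;
in particular it is antisymmetric. -/
theorem CSCle_isPartialOrder
    {E : Type*} [NormedAddCommGroup E] [NormedSpace ℝ E] [FiniteDimensional ℝ E]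
    {M : Type*} [TopologicalSpace M] {I : ModelWithCorners ℝ E M}
    {G : Type*} [TopologicalSpace G] [ChartedSpace M G] [Group G] [LieGroup I (⊤ : ℕ∞) G]
    [CompactSpace G] :
    IsPartialOrder (CSC G) (CSCle (G := G)) := by
  haveI : IsTopologicalGroup G := topologicalGroup_of_lieGroup I ((⊤ : ℕ∞) : WithTop ℕ∞)
  haveI : T2Space G := t2Space_of_charted I
  refine { refl := ?_, trans := ?_, antisymm := ?_ }
  · intro x
    induction x using Quot.ind with
    | mk A => exact ⟨A, A, rfl, rfl, 1, le_of_eq (conjMap_one _)⟩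
  · rintro x y z ⟨A, B, hA, hB, g, hg⟩ ⟨B', C, hB', hC, h, hh⟩
    obtain ⟨u, hu⟩ : conjRel B B' := quot_eq_conjRel (hB.trans hB'.symm)
    refine ⟨A, C, hA, hC, h * u * g, ?_⟩
    calc Subgroup.map (MulAut.conj (h * u * g)).toMonoidHom A.1
        = Subgroup.map (MulAut.conj h).toMonoidHom
            (Subgroup.map (MulAut.conj u).toMonoidHom
              (Subgroup.map (MulAut.conj g).toMonoidHom A.1)) := by
          rw [← conjMap_mul, ← conjMap_mul, mul_assoc]
      _ ≤ Subgroup.map (MulAut.conj h).toMonoidHom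
            (Subgroup.map (MulAut.conj u).toMonoidHom B.1) :=
          Subgroup.map_mono (Subgroup.map_mono hg)
      _ = Subgroup.map (MulAut.conj h).toMonoidHom B'.1 := by rw [hu]
      _ ≤ C.1 := hh
  · rintro x y ⟨A, B, hA, hB, g, hg⟩ ⟨B', A', hB', hA', h, hh⟩
    obtain ⟨u, hu⟩ : conjRel B B' := quot_eq_conjRel (hB.trans hB'.symm)
    obtain ⟨v, hv⟩ : conjRel A' A := quot_eq_conjRel (hA'.trans hA.symm)
    -- from hh : map h B' ≤ A', derive map (v*h*u) B ≤ A
    have hh' : Subgroup.map (MulAut.conj (v * h * u)).toMonoidHom B.1 ≤ A.1 := by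
      calc Subgroup.map (MulAut.conj (v * h * u)).toMonoidHom B.1
          = Subgroup.map (MulAut.conj v).toMonoidHom
              (Subgroup.map (MulAut.conj h).toMonoidHom
                (Subgroup.map (MulAut.conj u).toMonoidHom B.1)) := by
            rw [← conjMap_mul, ← conjMap_mul, mul_assoc]
        _ = Subgroup.map (MulAut.conj v).toMonoidHom
              (Subgroup.map (MulAut.conj h).toMonoidHom B'.1) := by rw [hu]
        _ ≤ Subgroup.map (MulAut.conj v).toMonoidHom A'.1 := Subgroup.map_mono hh
        _ = A.1 := hv
    set s := v * h * u with hs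
    -- map (s*g) A ≤ A, hence equality
    have hsg : Subgroup.map (MulAut.conj (s * g)).toMonoidHom A.1 ≤ A.1 := by
      rw [conjMap_mul]
      exact le_trans (Subgroup.map_mono hg) hh'
    have heq : Subgroup.map (MulAut.conj (s * g)).toMonoidHom A.1 = A.1 :=
      conj_le_self_eq A.2 (s * g) hsg
    -- now B ≤ map g A
    have hBle : B.1 ≤ Subgroup.map (MulAut.conj g).toMonoidHom A.1 := by
      rw [← conjMap_le_iff s]
      calc Subgroup.map (MulAut.conj s).toMonoidHom B.1
          ≤ A.1 := hh'
        _ = Subgroup.map (MulAut.conj (s * g)).toMonoidHom A.1 := heq.symm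
        _ = Subgroup.map (MulAut.conj s).toMonoidHom
              (Subgroup.map (MulAut.conj g).toMonoidHom A.1) := conjMap_mul _ _ _
    have : conjRel A B := ⟨g, le_antisymm hg hBle⟩
    rw [← hA, ← hB]
    exact Quot.sound this
end

section
/- Let G be a compact Lie group and K, H closed subgroups. If [K] ≤ [H] and [H] ≤ [K] in CSC(G) (i.e. some conjugate of K lies in H and some conjugate of H lies in K), then [K] = [H], i.e. K and H are conjugate in G. -/
open Filter Set

/-- In a compact topological group, if `a * k * a⁻¹ ∈ K` for all `k ∈ K` with `K` a closed
subgroup, then also `a⁻¹ * k * a ∈ K`. -/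
theorem conj_mem_of_inv_conj_mem {G : Type*} [Group G] [TopologicalSpace G]
    [IsTopologicalGroup G] [CompactSpace G] (K : Subgroup G) (hK : IsClosed (K : Set G))
    {a : G} (h : ∀ k ∈ K, a * k * a⁻¹ ∈ K) : ∀ k ∈ K, a⁻¹ * k * a ∈ K := by
  intro k hk
  have hpow : ∀ n : ℕ, a ^ n * k * (a ^ n)⁻¹ ∈ K := by
    intro n
    induction n with
    | zero => simpa using hk
    | succ n ih =>
      have := h _ ih
      have heq : a * (a ^ n * k * (a ^ n)⁻¹) * a⁻¹ = a ^ (n + 1) * k * (a ^ (n + 1))⁻¹ := by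
        group
      rwa [heq] at this
  have hmem : a⁻¹ ∈ closure (range (a ^ · : ℕ → G)) := by
    have h1 := mapClusterPt_self_zpow_atTop_pow a (-1)
    have := (mapClusterPt_atTop_pow_tfae (a ^ (-1 : ℤ)) a).out 0 2
    rw [this] at h1
    simpa using h1
  have hcont : Continuous fun x : G => x * k * x⁻¹ := by continuity
  have himg : (fun x : G => x * k * x⁻¹) '' closure (range (a ^ · : ℕ → G)) ⊆ (K : Set G) := by
    have : (fun x : G => x * k * x⁻¹) '' closure (range (a ^ · : ℕ → G)) ⊆
        closure ((fun x : G => x * k * x⁻¹) '' range (a ^ · : ℕ → G)) :=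
      image_closure_subset_closure_image hcont
    refine this.trans ?_
    rw [← hK.closure_eq]
    apply closure_mono
    rintro _ ⟨_, ⟨n, rfl⟩, rfl⟩
    exact hpow n
  exact himg ⟨a⁻¹, hmem, by group⟩

/-- Antisymmetry of conjugacy classes of closed subgroups of a compact Lie group:
if some conjugate of `K` lies in `H` and some conjugate of `H` lies in `K`,
then `K` and `H` are conjugate. -/
theorem conj_classes_antisymm
    {E : Type*} [NormedAddCommGroup E] [NormedSpace ℝ E] [FiniteDimensional ℝ E]
    {M : Type*} [TopologicalSpace M] {I : ModelWithCorners ℝ E M}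
    {G : Type*} [TopologicalSpace G] [ChartedSpace M G] [Group G] [LieGroup I (⊤ : ℕ∞) G]
    [CompactSpace G]
    (K H : Subgroup G) (hK : IsClosed (K : Set G)) (hH : IsClosed (H : Set G))
    (h1 : ∃ g : G, Subgroup.map (MulAut.conj g).toMonoidHom K ≤ H)
    (h2 : ∃ g' : G, Subgroup.map (MulAut.conj g').toMonoidHom H ≤ K) :
    ∃ g : G, Subgroup.map (MulAut.conj g).toMonoidHom K = H := by
  have : IsTopologicalGroup G := topologicalGroup_of_lieGroup I (⊤ : ℕ∞)
  obtain ⟨g, hg⟩ := h1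
  obtain ⟨g', hg'⟩ := h2
  refine ⟨g, le_antisymm hg ?_⟩
  -- set a = g' * g; then a K a⁻¹ ≤ K
  set a := g' * g with ha
  have haK : ∀ k ∈ K, a * k * a⁻¹ ∈ K := by
    intro k hk
    have h1' : g * k * g⁻¹ ∈ H := hg ⟨k, hk, rfl⟩
    have h2' : g' * (g * k * g⁻¹) * g'⁻¹ ∈ K := hg' ⟨_, h1', rfl⟩
    have : g' * (g * k * g⁻¹) * g'⁻¹ = a * k * a⁻¹ := by rw [ha]; group
    rwa [this] at h2'
  have hrev := conj_mem_of_inv_conj_mem K hK haK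
  -- H ≤ g K g⁻¹ : for h ∈ H, g' h g'⁻¹ ∈ K, so a⁻¹ (g' h g'⁻¹) a ∈ K, i.e. g⁻¹ h g ∈ K
  intro h hh
  have hk : g' * h * g'⁻¹ ∈ K := hg' ⟨h, hh, rfl⟩
  have := hrev _ hk
  have heq : a⁻¹ * (g' * h * g'⁻¹) * a = g⁻¹ * h * g := by rw [ha]; group
  rw [heq] at this
  exact ⟨g⁻¹ * h * g, this, by simp; group⟩
end
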